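/- The vector f = (2, 2, 2, 4, 4, 4, log₂ 48) ∈ ℝ^7 satisfies f = (log₂ 3)·e_1 + (log₂ 3)·e_2 + (log₂ 3)·e_3 + (log₂(4/3))·e_{123'}, and f cannot be written as a nonnegative linear combination of any proper subset of {e_1, e_2, e_3, e_{123'}}. -/
import Mathlib


open Finset

/-- Probability that the discrete random variable `X` (on finite sample space `Fin N`
with probability mass function `p`) takes the value `a`. -/
noncomputable def pr {N : ℕ} (p : Fin N → ℝ) {A : Type} [DecidableEq A]
    (X : Fin N → A) (a : A) : ℝ :=
  ∑ ω, if X ω = a then p ω else 0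

/-- Base-2 Shannon entropy of the random variable `X` under the pmf `p`. -/
noncomputable def ent {N : ℕ} (p : Fin N → ℝ) {A : Type} [Fintype A] [DecidableEq A]
    (X : Fin N → A) : ℝ :=
  -∑ a, pr p X a * Real.logb 2 (pr p X a)

/-- `p` is a probability mass function. -/
def IsDist {N : ℕ} (p : Fin N → ℝ) : Prop :=
  (∀ ω, 0 ≤ p ω) ∧ ∑ ω, p ω = 1

/-- The entropy vector of three finite-alphabet random variables, with components
(H(X₁), H(X₂), H(X₃), H(X₁X₂), H(X₁X₃), H(X₂X₃), H(X₁X₂X₃)). -/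
noncomputable def entVec3 {N a₁ a₂ a₃ : ℕ} (p : Fin N → ℝ)
    (X₁ : Fin N → Fin a₁) (X₂ : Fin N → Fin a₂) (X₃ : Fin N → Fin a₃) : Fin 7 → ℝ :=
  ![ent p X₁, ent p X₂, ent p X₃,
    ent p (fun ω => (X₁ ω, X₂ ω)),
    ent p (fun ω => (X₁ ω, X₃ ω)),
    ent p (fun ω => (X₂ ω, X₃ ω)),
    ent p (fun ω => (X₁ ω, X₂ ω, X₃ ω))]

/-- `h ∈ ℝ⁷` is the entropy vector of some triple of finite-alphabet random variables. -/
def IsEntropic (h : Fin 7 → ℝ) : Prop :=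
  ∃ (N a₁ a₂ a₃ : ℕ) (p : Fin N → ℝ)
    (X₁ : Fin N → Fin a₁) (X₂ : Fin N → Fin a₂) (X₃ : Fin N → Fin a₃),
    IsDist p ∧ entVec3 p X₁ X₂ X₃ = h

noncomputable def e1 : Fin 7 → ℝ := ![1,0,0,1,1,0,1]
noncomputable def e2 : Fin 7 → ℝ := ![0,1,0,1,0,1,1]
noncomputable def e3 : Fin 7 → ℝ := ![0,0,1,0,1,1,1]
noncomputable def e12 : Fin 7 → ℝ := ![1,1,0,1,1,1,1]
noncomputable def e13 : Fin 7 → ℝ := ![1,0,1,1,1,1,1]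
noncomputable def e23 : Fin 7 → ℝ := ![0,1,1,1,1,1,1]
noncomputable def e123 : Fin 7 → ℝ := ![1,1,1,1,1,1,1]
noncomputable def e123' : Fin 7 → ℝ := ![1,1,1,2,2,2,2]

noncomputable def f : Fin 7 → ℝ := ![2, 2, 2, 4, 4, 4, Real.logb 2 48]

/-- f = (log₂3)e₁+(log₂3)e₂+(log₂3)e₃+(log₂(4/3))e₁₂₃', and f cannot be written as a
nonnegative combination of any proper subset of {e₁,e₂,e₃,e₁₂₃'} (equivalently, every
nonnegative representation has all four coefficients nonzero). -/
theorem stmt7 :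
    f = Real.logb 2 3 • e1 + Real.logb 2 3 • e2 + Real.logb 2 3 • e3 +
        Real.logb 2 (4/3) • e123' ∧
    ∀ c1 c2 c3 c4 : ℝ, 0 ≤ c1 → 0 ≤ c2 → 0 ≤ c3 → 0 ≤ c4 →
      f = c1 • e1 + c2 • e2 + c3 • e3 + c4 • e123' →
      c1 ≠ 0 ∧ c2 ≠ 0 ∧ c3 ≠ 0 ∧ c4 ≠ 0 := by
  have l48 : Real.logb 2 48 = 3 * Real.logb 2 3 + 2 * Real.logb 2 (4/3) := by
    rw [show (48:ℝ) = 3^3 * (4/3)^2 by norm_num, Real.logb_mul (by norm_num) (by norm_num),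
      Real.logb_pow, Real.logb_pow]
    push_cast; ring
  have l4 : Real.logb 2 3 + Real.logb 2 (4/3) = 2 := by
    rw [← Real.logb_mul (by norm_num) (by norm_num), show (3:ℝ) * (4/3) = 2^2 by norm_num,
      Real.logb_pow, Real.logb_self_eq_one (by norm_num)]
    norm_num
  have l3pos : 0 < Real.logb 2 3 := Real.logb_pos (by norm_num) (by norm_num)
  have l43pos : 0 < Real.logb 2 (4/3) := Real.logb_pos (by norm_num) (by norm_num)
  constructor
  · funext i
    fin_cases i
    · show (2:ℝ) = Real.logb 2 3 * 1 + Real.logb 2 3 * 0 + Real.logb 2 3 * 0 +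
        Real.logb 2 (4/3) * 1
      linarith
    · show (2:ℝ) = Real.logb 2 3 * 0 + Real.logb 2 3 * 1 + Real.logb 2 3 * 0 +
        Real.logb 2 (4/3) * 1
      linarith
    · show (2:ℝ) = Real.logb 2 3 * 0 + Real.logb 2 3 * 0 + Real.logb 2 3 * 1 +
        Real.logb 2 (4/3) * 1
      linarith
    · show (4:ℝ) = Real.logb 2 3 * 1 + Real.logb 2 3 * 1 + Real.logb 2 3 * 0 +
        Real.logb 2 (4/3) * 2
      linarith
    · show (4:ℝ) = Real.logb 2 3 * 1 + Real.logb 2 3 * 0 + Real.logb 2 3 * 1 +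
        Real.logb 2 (4/3) * 2
      linarith
    · show (4:ℝ) = Real.logb 2 3 * 0 + Real.logb 2 3 * 1 + Real.logb 2 3 * 1 +
        Real.logb 2 (4/3) * 2
      linarith
    · show Real.logb 2 48 = Real.logb 2 3 * 1 + Real.logb 2 3 * 1 + Real.logb 2 3 * 1 +
        Real.logb 2 (4/3) * 2
      linarith
  · intro c1 c2 c3 c4 h1 h2 h3 h4 heq
    have E0 : (2:ℝ) = c1 * 1 + c2 * 0 + c3 * 0 + c4 * 1 := congrFun heq 0
    have E1 : (2:ℝ) = c1 * 0 + c2 * 1 + c3 * 0 + c4 * 1 := congrFun heq 1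
    have E2 : (2:ℝ) = c1 * 0 + c2 * 0 + c3 * 1 + c4 * 1 := congrFun heq 2
    have E6 : Real.logb 2 48 = c1 * 1 + c2 * 1 + c3 * 1 + c4 * 2 := congrFun heq 6
    have lt6 : Real.logb 2 48 < 6 := by
      have h' : Real.logb 2 48 < Real.logb 2 64 :=
        Real.logb_lt_logb (by norm_num) (by norm_num) (by norm_num)
      have h64 : Real.logb 2 64 = 6 := by
        rw [show (64:ℝ) = 2^6 by norm_num, Real.logb_pow,
          Real.logb_self_eq_one (by norm_num)]; norm_num
      linarith
    have gt4 : (4:ℝ) < Real.logb 2 48 := by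
      have h' : Real.logb 2 16 < Real.logb 2 48 :=
        Real.logb_lt_logb (by norm_num) (by norm_num) (by norm_num)
      have h16 : Real.logb 2 16 = 4 := by
        rw [show (16:ℝ) = 2^4 by norm_num, Real.logb_pow,
          Real.logb_self_eq_one (by norm_num)]; norm_num
      linarith
    refine ⟨fun h => ?_, fun h => ?_, fun h => ?_, fun h => ?_⟩ <;> rw [h] at E0 E1 E2 E6 <;>
      linarith
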